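/- Let f, g be continuous on [-1,1], let ρ_0 > 0, and let x(t,ρ) be analytic in (t,ρ) on [-1,1] × (−ρ_0, ρ_0), with x(t,0) = 0, satisfying for each |ρ| < ρ_0 the integral equation x(t,ρ) = ρ / (1 − ρ H(t,ρ)), where H(t,ρ) = ∫_{-1}^t (f(s)x(s,ρ) + g(s)) ds. Then the third partial derivative of H(1,ρ) with respect to ρ at ρ = 0 equals 3! ∫_{-1}^1 f(t) G(t)^2 dt + 3! ∫_{-1}^1 f(t) F(t) dt, where G(t) = ∫_{-1}^t g(s) ds and F(t) = ∫_{-1}^t f(s) ds. -/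

import Mathlib

open MeasureTheory intervalIntegral

namespace ThirdDerivAux

noncomputable def Dn (F : ℝ × ℝ → ℝ) : ℕ → ℝ × ℝ → ℝ
  | 0 => F
  | k + 1 => fun p => fderiv ℝ (Dn F k) p (0, 1)

lemma Dn_analytic {F : ℝ × ℝ → ℝ} {U : Set (ℝ × ℝ)} (hF : AnalyticOnNhd ℝ F U) :
    ∀ k, AnalyticOnNhd ℝ (Dn F k) U := by
  intro k
  induction k with
  | zero => exact hF
  | succ k ih =>
    intro p hp
    have h1 : AnalyticAt ℝ (fderiv ℝ (Dn F k)) p := ih.fderiv p hp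
    exact ((ContinuousLinearMap.apply ℝ ℝ (((0 : ℝ), (1 : ℝ)) : ℝ × ℝ)).analyticAt
      (fderiv ℝ (Dn F k) p)).comp h1

lemma Dn_hasDerivAt {F : ℝ × ℝ → ℝ} {U : Set (ℝ × ℝ)} (hF : AnalyticOnNhd ℝ F U)
    (k : ℕ) {p : ℝ × ℝ} (hp : p ∈ U) :
    HasDerivAt (fun r => Dn F k (p.1, r)) (Dn F (k + 1) p) p.2 := by
  have h1 : HasFDerivAt (Dn F k) (fderiv ℝ (Dn F k) p) p :=
    ((Dn_analytic hF k) p hp).differentiableAt.hasFDerivAt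
  have h2 : HasDerivAt (fun r : ℝ => ((p.1, r) : ℝ × ℝ)) (((0 : ℝ), (1 : ℝ)) : ℝ × ℝ) p.2 :=
    (hasDerivAt_const _ _).prodMk (hasDerivAt_id _)
  have h3 := h1.comp_hasDerivAt p.2 (by simpa using h2)
  exact h3

lemma hasDerivAt_param_integral
    {U : Set (ℝ × ℝ)} {δ : ℝ}
    (hsub : Set.Icc (-1 : ℝ) 1 ×ˢ Set.Icc (-δ) δ ⊆ U)
    {D D' : ℝ × ℝ → ℝ} (hD : ContinuousOn D U) (hD' : ContinuousOn D' U)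
    (hderiv : ∀ p ∈ U, HasDerivAt (fun r => D (p.1, r)) (D' p) p.2)
    {f : ℝ → ℝ} (hf : ContinuousOn f (Set.Icc (-1 : ℝ) 1))
    {t : ℝ} (ht : t ∈ Set.Icc (-1 : ℝ) 1) {ρ : ℝ} (hρ : |ρ| < δ) :
    HasDerivAt (fun r => ∫ s in (-1 : ℝ)..t, f s * D (s, r))
      (∫ s in (-1 : ℝ)..t, f s * D' (s, ρ)) ρ := by
  have hQ : IsCompact (Set.Icc (-1 : ℝ) 1 ×ˢ Set.Icc (-δ) δ) := isCompact_Icc.prod isCompact_Icc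
  have hfst : ContinuousOn (fun p : ℝ × ℝ => f p.1) (Set.Icc (-1 : ℝ) 1 ×ˢ Set.Icc (-δ) δ) :=
    hf.comp continuous_fst.continuousOn (fun p hp => hp.1)
  obtain ⟨C, hC⟩ := hQ.exists_bound_of_continuousOn (hfst.mul (hD'.mono hsub))
  have hsubIcc : Set.uIcc (-1 : ℝ) t ⊆ Set.Icc (-1 : ℝ) 1 := by
    rw [Set.uIcc_of_le ht.1]
    exact fun s hs => ⟨hs.1, le_trans hs.2 ht.2⟩
  have hsubI : Set.uIoc (-1 : ℝ) t ⊆ Set.Icc (-1 : ℝ) 1 := fun s hs =>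
    hsubIcc (Set.uIoc_subset_uIcc hs)
  have hmemU : ∀ r : ℝ, |r| ≤ δ → ∀ s ∈ Set.Icc (-1 : ℝ) 1, ((s, r) : ℝ × ℝ) ∈ U := by
    intro r hr s hs
    exact hsub ⟨hs, Set.mem_Icc.mpr (abs_le.mp hr)⟩
  have hcontD : ∀ r : ℝ, |r| ≤ δ →
      ContinuousOn (fun s => f s * D (s, r)) (Set.Icc (-1 : ℝ) 1) := by
    intro r hr
    exact hf.mul (hD.comp ((continuous_id.prodMk continuous_const).continuousOn)
      (fun s hs => hmemU r hr s hs))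
  have hcontD' : ∀ r : ℝ, |r| ≤ δ →
      ContinuousOn (fun s => f s * D' (s, r)) (Set.Icc (-1 : ℝ) 1) := by
    intro r hr
    exact hf.mul (hD'.comp ((continuous_id.prodMk continuous_const).continuousOn)
      (fun s hs => hmemU r hr s hs))
  have hint : ∀ r : ℝ, |r| ≤ δ →
      IntervalIntegrable (fun s => f s * D (s, r)) volume (-1) t :=
    fun r hr => ((hcontD r hr).mono hsubIcc).intervalIntegrable
  have hint' : ∀ r : ℝ, |r| ≤ δ →
      IntervalIntegrable (fun s => f s * D' (s, r)) volume (-1) t :=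
    fun r hr => ((hcontD' r hr).mono hsubIcc).intervalIntegrable
  have hev : ∀ᶠ r in nhds ρ, r ∈ Set.Ioo (-δ) δ :=
    isOpen_Ioo.eventually_mem (Set.mem_Ioo.mpr (abs_lt.mp hρ))
  have hεpos : 0 < δ - |ρ| := by
    have := abs_nonneg ρ; linarith
  have hball : ∀ r ∈ Metric.ball ρ (δ - |ρ|), |r| ≤ δ := by
    intro r hr
    have h1 : |r - ρ| < δ - |ρ| := by simpa [Real.dist_eq] using hr
    have h2 := abs_sub_abs_le_abs_sub r ρ
    linarith
  refine (intervalIntegral.hasDerivAt_integral_of_dominated_loc_of_deriv_le (Metric.ball_mem_nhds ρ hεpos)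
    (F := fun r s => f s * D (s, r)) (F' := fun r s => f s * D' (s, r))
    (bound := fun _ => C) ?_ (hint ρ hρ.le) ?_ ?_ ?_ ?_).2
  · exact hev.mono fun r hr =>
      (intervalIntegrable_iff.mp (hint r (le_of_lt (abs_lt.mpr ⟨hr.1, hr.2⟩)))).aestronglyMeasurable
  · exact (intervalIntegrable_iff.mp (hint' ρ hρ.le)).aestronglyMeasurable
  · refine Filter.Eventually.of_forall fun s hs r hr => ?_
    exact hC (s, r) ⟨hsubI hs, Set.mem_Icc.mpr (abs_le.mp (hball r hr))⟩
  · exact intervalIntegrable_const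
  · refine Filter.Eventually.of_forall fun s hs r hr => ?_
    exact (hderiv (s, r) (hmemU r (hball r hr) s (hsubI hs))).const_mul (f s)

end ThirdDerivAux

open ThirdDerivAux in
/-- Let `f, g` be continuous on `[-1,1]` and let `x(t,ρ)` be analytic in `(t,ρ)` on
`[-1,1] × (−ρ₀, ρ₀)`, with `x(t,0) = 0`, satisfying the fixed-point equation
`x(t,ρ) = ρ / (1 − ρ H(t,ρ))` where `H(t,ρ) = ∫_{-1}^t (f(s) x(s,ρ) + g(s)) ds`.
Then `∂³/∂ρ³ H(1,ρ) |_{ρ=0} = 3! ∫_{-1}^1 f(t) G(t)² dt + 3! ∫_{-1}^1 f(t) F(t) dt`,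
where `G(t) = ∫_{-1}^t g(s) ds` and `F(t) = ∫_{-1}^t f(s) ds`. -/
theorem third_deriv_H_at_zero
    (f g : ℝ → ℝ)
    (hf : ContinuousOn f (Set.Icc (-1 : ℝ) 1))
    (hg : ContinuousOn g (Set.Icc (-1 : ℝ) 1))
    (ρ₀ : ℝ) (hρ₀ : 0 < ρ₀)
    (x : ℝ → ℝ → ℝ)
    (hanalytic : AnalyticOnNhd ℝ (fun p : ℝ × ℝ => x p.1 p.2)
      (Set.Icc (-1 : ℝ) 1 ×ˢ Set.Ioo (-ρ₀) ρ₀))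
    (hzero : ∀ t ∈ Set.Icc (-1 : ℝ) 1, x t 0 = 0)
    (hfix : ∀ ρ : ℝ, |ρ| < ρ₀ → ∀ t ∈ Set.Icc (-1 : ℝ) 1,
      x t ρ = ρ / (1 - ρ * ∫ s in (-1 : ℝ)..t, (f s * x s ρ + g s))) :
    iteratedDeriv 3 (fun ρ : ℝ => ∫ t in (-1 : ℝ)..1, (f t * x t ρ + g t)) 0 =
      (Nat.factorial 3 : ℝ) * (∫ t in (-1 : ℝ)..1, f t * (∫ s in (-1 : ℝ)..t, g s) ^ 2) +
      (Nat.factorial 3 : ℝ) * (∫ t in (-1 : ℝ)..1, f t * ∫ s in (-1 : ℝ)..t, f s) := by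
  classical
  set X : ℝ × ℝ → ℝ := fun p => x p.1 p.2 with hXdef
  set U : Set (ℝ × ℝ) := {p | AnalyticAt ℝ X p} with hUdef
  have hUopen : IsOpen U := isOpen_analyticAt ℝ X
  have hXU : AnalyticOnNhd ℝ X U := fun p hp => hp
  have hK0 : IsCompact (Set.Icc (-1 : ℝ) 1 ×ˢ Set.Icc (0 : ℝ) 0) :=
    isCompact_Icc.prod isCompact_Icc
  have hK0U : Set.Icc (-1 : ℝ) 1 ×ˢ Set.Icc (0 : ℝ) 0 ⊆ U := by
    intro p hp
    have h2 : p.2 = 0 := le_antisymm hp.2.2 hp.2.1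
    have : p ∈ Set.Icc (-1 : ℝ) 1 ×ˢ Set.Ioo (-ρ₀) ρ₀ := by
      refine ⟨hp.1, ?_⟩
      rw [h2]
      exact Set.mem_Ioo.mpr ⟨neg_lt_zero.mpr hρ₀, hρ₀⟩
    exact hanalytic p this
  obtain ⟨δ₁, hδ₁pos, hthick⟩ := hK0.exists_thickening_subset_open hUopen hK0U
  set δ : ℝ := δ₁ / 2 with hδdef
  have hδpos : 0 < δ := by positivity
  have hsub : Set.Icc (-1 : ℝ) 1 ×ˢ Set.Icc (-δ) δ ⊆ U := by
    intro p hp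
    apply hthick
    rw [Metric.mem_thickening_iff]
    refine ⟨(p.1, 0), ⟨hp.1, by simp⟩, ?_⟩
    have h2 : |p.2| ≤ δ := abs_le.mpr ⟨hp.2.1, hp.2.2⟩
    have hd : dist p (p.1, 0) = |p.2| := by
      rw [Prod.dist_eq]
      simp [Real.dist_eq, abs_nonneg]
    rw [hd]
    calc |p.2| ≤ δ := h2
      _ < δ₁ := by rw [hδdef]; linarith
  -- the ρ-derivatives
  set D : ℕ → ℝ × ℝ → ℝ := Dn X with hDdef
  have hDc : ∀ k, ContinuousOn (D k) U := fun k => (Dn_analytic hXU k).continuousOn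
  have hmemU : ∀ r : ℝ, |r| ≤ δ → ∀ s ∈ Set.Icc (-1 : ℝ) 1, ((s, r) : ℝ × ℝ) ∈ U := by
    intro r hr s hs
    exact hsub ⟨hs, Set.mem_Icc.mpr (abs_le.mp hr)⟩
  have hDd' : ∀ (k : ℕ), ∀ t ∈ Set.Icc (-1 : ℝ) 1, ∀ r : ℝ, |r| ≤ δ →
      HasDerivAt (fun r' => D k (t, r')) (D (k + 1) (t, r)) r := by
    intro k t ht r hr
    exact Dn_hasDerivAt hXU k (hmemU r hr t ht)
  have hsubIcc : ∀ t ∈ Set.Icc (-1 : ℝ) 1, Set.uIcc (-1 : ℝ) t ⊆ Set.Icc (-1 : ℝ) 1 := by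
    intro t ht
    rw [Set.uIcc_of_le ht.1]
    exact fun s hs => ⟨hs.1, le_trans hs.2 ht.2⟩
  have hsubI : ∀ t ∈ Set.Icc (-1 : ℝ) 1, Set.uIoc (-1 : ℝ) t ⊆ Set.Icc (-1 : ℝ) 1 :=
    fun t ht s hs => hsubIcc t ht (Set.uIoc_subset_uIcc hs)
  -- the integrals Ψ k t ρ = ∫ f · (∂^k x)
  set Ψ : ℕ → ℝ → ℝ → ℝ := fun k t ρ => ∫ s in (-1 : ℝ)..t, f s * D k (s, ρ) with hΨdef
  have hΨd : ∀ (k : ℕ), ∀ t ∈ Set.Icc (-1 : ℝ) 1, ∀ ρ : ℝ, |ρ| < δ →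
      HasDerivAt (Ψ k t) (Ψ (k + 1) t ρ) ρ := by
    intro k t ht ρ hρ
    exact hasDerivAt_param_integral hsub (hDc k) (hDc (k + 1))
      (fun p hp => Dn_hasDerivAt hXU k hp) hf ht hρ
  -- continuity of x(·, r) and the full integrand
  have hXcont : ∀ r : ℝ, |r| ≤ δ → ContinuousOn (fun s => x s r) (Set.Icc (-1 : ℝ) 1) := by
    intro r hr
    exact hXU.continuousOn.comp ((continuous_id.prodMk continuous_const).continuousOn)
      (fun s hs => hmemU r hr s hs)
  have hIcont : ∀ r : ℝ, |r| ≤ δ →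
      ContinuousOn (fun s => f s * x s r + g s) (Set.Icc (-1 : ℝ) 1) :=
    fun r hr => (hf.mul (hXcont r hr)).add hg
  -- H(t, ρ)
  set h : ℝ → ℝ → ℝ := fun t ρ => ∫ s in (-1 : ℝ)..t, (f s * x s ρ + g s) with hhdef
  -- uniform bound C
  obtain ⟨C, hC⟩ := (isCompact_Icc.prod isCompact_Icc :
      IsCompact (Set.Icc (-1 : ℝ) 1 ×ˢ Set.Icc (-δ) δ)).exists_bound_of_continuousOn
    (((hf.comp continuous_fst.continuousOn fun p hp => hp.1).mul
      (hXU.continuousOn.mono hsub)).add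
      (hg.comp continuous_fst.continuousOn fun p hp => hp.1))
  have hC0 : 0 ≤ C := by
    have h00 : ((0 : ℝ), (0 : ℝ)) ∈ Set.Icc (-1 : ℝ) 1 ×ˢ Set.Icc (-δ) δ := by
      constructor
      · constructor <;> norm_num
      · constructor <;> simp [hδpos.le, neg_nonpos.mpr hδpos.le]
    exact le_trans (norm_nonneg _) (hC _ h00)
  have hHb : ∀ r : ℝ, |r| ≤ δ → ∀ t ∈ Set.Icc (-1 : ℝ) 1, |h t r| ≤ C * 2 := by
    intro r hr t ht
    have h1 : ∀ s ∈ Set.uIoc (-1 : ℝ) t, ‖f s * x s r + g s‖ ≤ C := by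
      intro s hs
      exact hC (s, r) ⟨hsubI t ht hs, Set.mem_Icc.mpr (abs_le.mp hr)⟩
    have h2 := intervalIntegral.norm_integral_le_of_norm_le_const h1
    have h3 : |t - (-1 : ℝ)| ≤ 2 := by
      rw [abs_le]; constructor <;> [linarith [ht.1]; linarith [ht.2]]
    calc |h t r| ≤ C * |t - (-1 : ℝ)| := h2
      _ ≤ C * 2 := by nlinarith
  -- small radius ε
  set ε : ℝ := min δ (min ρ₀ (1 / (4 * C + 2))) with hεdef
  have hεpos : 0 < ε := lt_min hδpos (lt_min hρ₀ (by positivity))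
  have hεδ : ε ≤ δ := min_le_left _ _
  have hερ₀ : ε ≤ ρ₀ := le_trans (min_le_right _ _) (min_le_left _ _)
  have hεC : ε ≤ 1 / (4 * C + 2) := le_trans (min_le_right _ _) (min_le_right _ _)
  -- multiplicative form of the fixed point equation
  have hfix' : ∀ ρ : ℝ, |ρ| < ε → ∀ t ∈ Set.Icc (-1 : ℝ) 1,
      x t ρ = ρ + ρ * (x t ρ * h t ρ) := by
    intro ρ hρ t ht
    have hρρ₀ : |ρ| < ρ₀ := lt_of_lt_of_le hρ hερ₀
    have hfx := hfix ρ hρρ₀ t ht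
    have hHb' := hHb ρ (le_of_lt (lt_of_lt_of_le hρ hεδ)) t ht
    have hρC : |ρ| < 1 / (4 * C + 2) := lt_of_lt_of_le hρ hεC
    have h4C : (0 : ℝ) < 4 * C + 2 := by linarith
    have hlt : |ρ * h t ρ| < 1 := by
      rw [abs_mul]
      calc |ρ| * |h t ρ| ≤ |ρ| * (C * 2) :=
            mul_le_mul_of_nonneg_left hHb' (abs_nonneg ρ)
        _ < (1 / (4 * C + 2)) * (4 * C + 2) := by
            apply lt_of_le_of_lt (b := |ρ| * (4 * C + 2))
            · exact mul_le_mul_of_nonneg_left (by linarith) (abs_nonneg ρ)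
            · exact mul_lt_mul_of_pos_right hρC h4C
        _ = 1 := by field_simp
    have hne : 1 - ρ * h t ρ ≠ 0 := by
      intro hc
      have : ρ * h t ρ = 1 := by linarith [sub_eq_zero.mp hc]
      rw [this] at hlt
      simp at hlt
    rw [hfx]; change ρ / (1 - ρ * h t ρ) = ρ + ρ * (ρ / (1 - ρ * h t ρ) * h t ρ)
    field_simp
    ring
  -- derivative of h t in ρ
  have hhΨ : ∀ t ∈ Set.Icc (-1 : ℝ) 1, ∀ r : ℝ, |r| ≤ δ →
      h t r = Ψ 0 t r + ∫ s in (-1 : ℝ)..t, g s := by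
    intro t ht r hr
    have h1 : IntervalIntegrable (fun s => f s * x s r) volume (-1) t :=
      ((hf.mul (hXcont r hr)).mono (hsubIcc t ht)).intervalIntegrable
    have h2 : IntervalIntegrable g volume (-1) t :=
      (hg.mono (hsubIcc t ht)).intervalIntegrable
    exact intervalIntegral.integral_add h1 h2
  have hhd : ∀ t ∈ Set.Icc (-1 : ℝ) 1, ∀ r : ℝ, |r| < δ →
      HasDerivAt (h t) (Ψ 1 t r) r := by
    intro t ht r hr
    have h1 : HasDerivAt (fun r' => Ψ 0 t r' + ∫ s in (-1 : ℝ)..t, g s) (Ψ 1 t r) r := by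
      simpa using (hΨd 0 t ht r hr).add_const (∫ s in (-1 : ℝ)..t, g s)
    refine h1.congr_of_eventuallyEq ?_
    have := isOpen_Ioo.eventually_mem (Set.mem_Ioo.mpr (abs_lt.mp hr))
    exact this.mono fun r' hr' => hhΨ t ht r' (le_of_lt (abs_lt.mpr ⟨hr'.1, hr'.2⟩))
  have hxd : ∀ t ∈ Set.Icc (-1 : ℝ) 1, ∀ r : ℝ, |r| ≤ δ →
      HasDerivAt (fun r' => x t r') (D 1 (t, r)) r := by
    intro t ht r hr
    exact hDd' 0 t ht r hr
  -- first order Taylor identity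
  have E1 : ∀ t ∈ Set.Icc (-1 : ℝ) 1, ∀ ρ : ℝ, |ρ| < ε →
      D 1 (t, ρ) = 1 + (1 * (x t ρ * h t ρ) +
        ρ * (D 1 (t, ρ) * h t ρ + x t ρ * Ψ 1 t ρ)) := by
    intro t ht ρ hρ
    have hρδ : |ρ| < δ := lt_of_lt_of_le hρ hεδ
    have ha : HasDerivAt (fun r => x t r) (D 1 (t, ρ)) ρ := hxd t ht ρ hρδ.le
    have hh : HasDerivAt (h t) (Ψ 1 t ρ) ρ := hhd t ht ρ hρδ
    have hR : HasDerivAt (fun r => r + r * (x t r * h t r))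
        (1 + (1 * (x t ρ * h t ρ) + ρ * (D 1 (t, ρ) * h t ρ + x t ρ * Ψ 1 t ρ))) ρ :=
      (hasDerivAt_id ρ).add ((hasDerivAt_id ρ).mul (ha.mul hh))
    have heq : (fun r => x t r) =ᶠ[nhds ρ] fun r => r + r * (x t r * h t r) :=
      (isOpen_Ioo.eventually_mem (Set.mem_Ioo.mpr (abs_lt.mp hρ))).mono
        fun r hr => hfix' r (abs_lt.mpr ⟨hr.1, hr.2⟩) t ht
    exact ha.unique (hR.congr_of_eventuallyEq heq)
  -- second order Taylor identity
  have E2 : ∀ t ∈ Set.Icc (-1 : ℝ) 1, ∀ ρ : ℝ, |ρ| < ε →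
      D 2 (t, ρ) = 0 + ((0 * (x t ρ * h t ρ) +
          1 * (D 1 (t, ρ) * h t ρ + x t ρ * Ψ 1 t ρ)) +
        (1 * (D 1 (t, ρ) * h t ρ + x t ρ * Ψ 1 t ρ) +
          ρ * ((D 2 (t, ρ) * h t ρ + D 1 (t, ρ) * Ψ 1 t ρ) +
            (D 1 (t, ρ) * Ψ 1 t ρ + x t ρ * Ψ 2 t ρ)))) := by
    intro t ht ρ hρ
    have hρδ : |ρ| < δ := lt_of_lt_of_le hρ hεδ
    have ha : HasDerivAt (fun r => x t r) (D 1 (t, ρ)) ρ := hxd t ht ρ hρδ.le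
    have hh : HasDerivAt (h t) (Ψ 1 t ρ) ρ := hhd t ht ρ hρδ
    have hD1t : HasDerivAt (fun r => D 1 (t, r)) (D 2 (t, ρ)) ρ := hDd' 1 t ht ρ hρδ.le
    have hΨ1 : HasDerivAt (Ψ 1 t) (Ψ 2 t ρ) ρ := hΨd 1 t ht ρ hρδ
    have hR : HasDerivAt (fun r => 1 + (1 * (x t r * h t r) +
        r * (D 1 (t, r) * h t r + x t r * Ψ 1 t r)))
        (0 + ((0 * (x t ρ * h t ρ) + 1 * (D 1 (t, ρ) * h t ρ + x t ρ * Ψ 1 t ρ)) +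
          (1 * (D 1 (t, ρ) * h t ρ + x t ρ * Ψ 1 t ρ) +
            ρ * ((D 2 (t, ρ) * h t ρ + D 1 (t, ρ) * Ψ 1 t ρ) +
              (D 1 (t, ρ) * Ψ 1 t ρ + x t ρ * Ψ 2 t ρ))))) ρ :=
      (hasDerivAt_const ρ (1 : ℝ)).add
        (((hasDerivAt_const ρ (1 : ℝ)).mul (ha.mul hh)).add
          ((hasDerivAt_id ρ).mul ((hD1t.mul hh).add (ha.mul hΨ1))))
    have heq : (fun r => D 1 (t, r)) =ᶠ[nhds ρ]
        fun r => 1 + (1 * (x t r * h t r) +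
          r * (D 1 (t, r) * h t r + x t r * Ψ 1 t r)) :=
      (isOpen_Ioo.eventually_mem (Set.mem_Ioo.mpr (abs_lt.mp hρ))).mono
        fun r hr => E1 t ht r (abs_lt.mpr ⟨hr.1, hr.2⟩)
    exact hD1t.unique (hR.congr_of_eventuallyEq heq)
  -- values at ρ = 0
  have h0ε : |(0 : ℝ)| < ε := by simpa using hεpos
  have h0δ : |(0 : ℝ)| < δ := by simpa using hδpos
  have hh0 : ∀ t ∈ Set.Icc (-1 : ℝ) 1, h t 0 = ∫ s in (-1 : ℝ)..t, g s := by
    intro t ht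
    have heq : Set.EqOn (fun s => f s * x s 0 + g s) g (Set.uIcc (-1 : ℝ) t) := by
      intro s hs
      simp [hzero s (hsubIcc t ht hs)]
    exact intervalIntegral.integral_congr heq
  have hD1_0 : ∀ t ∈ Set.Icc (-1 : ℝ) 1, D 1 (t, 0) = 1 := by
    intro t ht
    have := E1 t ht 0 h0ε
    rw [hzero t ht] at this
    simpa using this
  have hΨ1_0 : ∀ t ∈ Set.Icc (-1 : ℝ) 1, Ψ 1 t 0 = ∫ s in (-1 : ℝ)..t, f s := by
    intro t ht
    have heq : Set.EqOn (fun s => f s * D 1 (s, 0)) f (Set.uIcc (-1 : ℝ) t) := by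
      intro s hs
      simp [hD1_0 s (hsubIcc t ht hs)]
    exact intervalIntegral.integral_congr heq
  have hD2_0 : ∀ t ∈ Set.Icc (-1 : ℝ) 1,
      D 2 (t, 0) = 2 * ∫ s in (-1 : ℝ)..t, g s := by
    intro t ht
    have := E2 t ht 0 h0ε
    rw [hzero t ht, hD1_0 t ht, hh0 t ht] at this
    rw [this]; ring
  have hD3_0 : ∀ t ∈ Set.Icc (-1 : ℝ) 1,
      D 3 (t, 0) = 6 * (∫ s in (-1 : ℝ)..t, g s) ^ 2 + 6 * ∫ s in (-1 : ℝ)..t, f s := by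
    intro t ht
    have ha : HasDerivAt (fun r => x t r) (D 1 (t, 0)) 0 := hxd t ht 0 h0δ.le
    have hh : HasDerivAt (h t) (Ψ 1 t 0) 0 := hhd t ht 0 h0δ
    have hD1t : HasDerivAt (fun r => D 1 (t, r)) (D 2 (t, 0)) 0 := hDd' 1 t ht 0 h0δ.le
    have hD2t : HasDerivAt (fun r => D 2 (t, r)) (D 3 (t, 0)) 0 := hDd' 2 t ht 0 h0δ.le
    have hΨ1 : HasDerivAt (Ψ 1 t) (Ψ 2 t 0) 0 := hΨd 1 t ht 0 h0δ
    have hΨ2 : HasDerivAt (Ψ 2 t) (Ψ 3 t 0) 0 := hΨd 2 t ht 0 h0δ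
    have hR := (hasDerivAt_const (0 : ℝ) (0 : ℝ)).add
      ((((hasDerivAt_const (0 : ℝ) (0 : ℝ)).mul (ha.mul hh)).add
        ((hasDerivAt_const (0 : ℝ) (1 : ℝ)).mul ((hD1t.mul hh).add (ha.mul hΨ1)))).add
        (((hasDerivAt_const (0 : ℝ) (1 : ℝ)).mul ((hD1t.mul hh).add (ha.mul hΨ1))).add
          ((hasDerivAt_id (0 : ℝ)).mul
            (((hD2t.mul hh).add (hD1t.mul hΨ1)).add
              ((hD1t.mul hΨ1).add (ha.mul hΨ2))))))
    have heq : (fun r => D 2 (t, r)) =ᶠ[nhds (0 : ℝ)]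
        fun r => 0 + ((0 * (x t r * h t r) +
            1 * (D 1 (t, r) * h t r + x t r * Ψ 1 t r)) +
          (1 * (D 1 (t, r) * h t r + x t r * Ψ 1 t r) +
            r * ((D 2 (t, r) * h t r + D 1 (t, r) * Ψ 1 t r) +
              (D 1 (t, r) * Ψ 1 t r + x t r * Ψ 2 t r)))) :=
      (isOpen_Ioo.eventually_mem (Set.mem_Ioo.mpr (abs_lt.mp h0ε))).mono
        fun r hr => E2 t ht r (abs_lt.mpr ⟨hr.1, hr.2⟩)
    have hval := hD2t.unique (hR.congr_of_eventuallyEq heq)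
    rw [hval]; simp only [id_eq, Pi.mul_apply, Pi.add_apply]
    rw [hzero t ht, hD1_0 t ht, hh0 t ht, hΨ1_0 t ht, hD2_0 t ht]
    ring
  -- assemble the third derivative at 0
  have h1mem : (1 : ℝ) ∈ Set.Icc (-1 : ℝ) 1 := by constructor <;> norm_num
  have d1' : ∀ ρ ∈ Set.Ioo (-ε) ε, deriv (h 1) ρ = Ψ 1 1 ρ := by
    intro ρ hρ
    exact (hhd 1 h1mem ρ (lt_of_lt_of_le (abs_lt.mpr ⟨hρ.1, hρ.2⟩) hεδ)).deriv
  have d2' : ∀ ρ ∈ Set.Ioo (-ε) ε, deriv (deriv (h 1)) ρ = Ψ 2 1 ρ := by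
    intro ρ hρ
    have heq : deriv (h 1) =ᶠ[nhds ρ] Ψ 1 1 :=
      (isOpen_Ioo.eventually_mem hρ).mono d1'
    rw [heq.deriv_eq]
    exact (hΨd 1 1 h1mem ρ (lt_of_lt_of_le (abs_lt.mpr ⟨hρ.1, hρ.2⟩) hεδ)).deriv
  have h0mem : (0 : ℝ) ∈ Set.Ioo (-ε) ε := ⟨by linarith, hεpos⟩
  have d3' : deriv (deriv (deriv (h 1))) 0 = Ψ 3 1 0 := by
    have heq : deriv (deriv (h 1)) =ᶠ[nhds (0 : ℝ)] Ψ 2 1 :=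
      (isOpen_Ioo.eventually_mem h0mem).mono d2'
    rw [heq.deriv_eq]
    exact (hΨd 2 1 h1mem 0 h0δ).deriv
  have hiter : iteratedDeriv 3 (h 1) 0 = deriv (deriv (deriv (h 1))) 0 := by
    rw [show (3 : ℕ) = 2 + 1 from rfl, iteratedDeriv_succ,
      show (2 : ℕ) = 1 + 1 from rfl, iteratedDeriv_succ, iteratedDeriv_one]
  -- continuity of the primitives
  have hIcc_eq : Set.uIcc (-1 : ℝ) 1 = Set.Icc (-1 : ℝ) 1 := Set.uIcc_of_le (by norm_num)
  have hGcont : ContinuousOn (fun t => ∫ s in (-1 : ℝ)..t, g s) (Set.Icc (-1 : ℝ) 1) := by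
    rw [← hIcc_eq]
    exact intervalIntegral.continuousOn_primitive_interval
      (by rw [hIcc_eq]; exact hg.integrableOn_Icc)
  have hFcont : ContinuousOn (fun t => ∫ s in (-1 : ℝ)..t, f s) (Set.Icc (-1 : ℝ) 1) := by
    rw [← hIcc_eq]
    exact intervalIntegral.continuousOn_primitive_interval
      (by rw [hIcc_eq]; exact hf.integrableOn_Icc)
  have hΨ3val : Ψ 3 1 0 = ∫ t in (-1 : ℝ)..1,
      (6 * (f t * (∫ s in (-1 : ℝ)..t, g s) ^ 2) + 6 * (f t * ∫ s in (-1 : ℝ)..t, f s)) := by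
    apply intervalIntegral.integral_congr
    intro s hs
    have hsIcc : s ∈ Set.Icc (-1 : ℝ) 1 := hsubIcc 1 h1mem hs
    show f s * D 3 (s, 0) = _
    rw [hD3_0 s hsIcc]
    ring
  have hi1 : IntervalIntegrable (fun t => 6 * (f t * (∫ s in (-1 : ℝ)..t, g s) ^ 2))
      volume (-1) 1 := by
    apply ContinuousOn.intervalIntegrable
    rw [hIcc_eq]
    exact continuousOn_const.mul (hf.mul (hGcont.pow 2))
  have hi2 : IntervalIntegrable (fun t => 6 * (f t * ∫ s in (-1 : ℝ)..t, f s))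
      volume (-1) 1 := by
    apply ContinuousOn.intervalIntegrable
    rw [hIcc_eq]
    exact continuousOn_const.mul (hf.mul hFcont)
  show iteratedDeriv 3 (h 1) 0 = _
  rw [hiter, d3', hΨ3val, intervalIntegral.integral_add hi1 hi2,
    intervalIntegral.integral_const_mul, intervalIntegral.integral_const_mul]
  norm_num [Nat.factorial]
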